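/- The dimension of the matroid polytope of a matroid M on n elements equals n − c(M), where c(M) is the number of connected components of M. -/

import Mathlib

open scoped Classical

/-- A circuit of a matroid: a minimal dependent set. -/
def Matroid.IsCircuit' {α : Type*} (M : Matroid α) (C : Set α) : Prop :=
  M.Dep C ∧ ∀ D, D ⊂ C → ¬ M.Dep D

/-- Two elements are related if they are equal or lie on a common circuit; the
equivalence classes of this relation are the connected components of the matroid. -/
def Matroid.ComponentRel {α : Type*} (M : Matroid α) (i j : α) : Prop :=
  i = j ∨ ∃ C, M.IsCircuit' C ∧ i ∈ C ∧ j ∈ C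

/-- The number of connected components `c(M)` of a matroid. -/
noncomputable def Matroid.numComponents {α : Type*} (M : Matroid α) : ℕ :=
  Nat.card (Quot M.ComponentRel)

/-- The 0/1 indicator vector `e_σ` of a set of elements of `[n]`. -/
noncomputable def indicatorVec {n : ℕ} (B : Set (Fin n)) : Fin n → ℝ :=
  fun i => if i ∈ B then 1 else 0

/-- The matroid polytope: the convex hull of the indicator vectors of the bases. -/
noncomputable def matroidPolytope {n : ℕ} (M : Matroid (Fin n)) : Set (Fin n → ℝ) :=
  convexHull ℝ {x | ∃ B, M.IsBase B ∧ x = indicatorVec B}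

namespace MatroidPolytopeAux

open Set

/-- The standard basis vector. -/
noncomputable def std {n : ℕ} (i : Fin n) : Fin n → ℝ := fun k => if k = i then 1 else 0

variable {n : ℕ}

/-- Every dependent set in a finite matroid contains a circuit. -/
lemma exists_circuit_subset {α : Type*} [Finite α] (M : Matroid α) {D : Set α}
    (hD : M.Dep D) : ∃ C, C ⊆ D ∧ M.IsCircuit' C := by
  have hS : {C : Set α | C ⊆ D ∧ M.Dep C}.Finite := Set.toFinite _
  have hne : {C : Set α | C ⊆ D ∧ M.Dep C}.Nonempty := ⟨D, subset_rfl, hD⟩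
  obtain ⟨C, hC, hmin⟩ := exists_minimal_of_wellFoundedLT (· ∈ {C : Set α | C ⊆ D ∧ M.Dep C}) hne
  refine ⟨C, hC.1, hC.2, fun D' hD' hdep => ?_⟩
  have := @hmin D' ⟨hD'.subset.trans hC.1, hdep⟩ hD'.subset
  exact hD'.ne (subset_antisymm hD'.subset this)

lemma indep_of_not_dep {α : Type*} {M : Matroid α} {I : Set α} (h : ¬ M.Dep I)
    (hIE : I ⊆ M.E) : M.Indep I := by
  by_contra hI
  exact h ⟨hI, hIE⟩

lemma circuit_diff_indep {α : Type*} {M : Matroid α} {C : Set α} (hC : M.IsCircuit' C)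
    {i : α} (hi : i ∈ C) : M.Indep (C \ {i}) := by
  refine indep_of_not_dep (hC.2 _ ?_) ((diff_subset).trans hC.1.subset_ground)
  exact sdiff_singleton_ssubset.mpr hi

lemma circuit_not_indep {α : Type*} {M : Matroid α} {C : Set α} (hC : M.IsCircuit' C) :
    ¬ M.Indep C := hC.1.not_indep

/-- Given a circuit `C` and two distinct elements `i j ∈ C`, there is a base `B` with
`j ∈ B`, `i ∉ B`, such that `insert i (B \ {j})` is also a base. -/
lemma circuit_exchange_bases {M : Matroid (Fin n)} (hE : M.E = Set.univ)
    {C : Set (Fin n)} (hC : M.IsCircuit' C) {i j : Fin n} (hi : i ∈ C) (hj : j ∈ C)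
    (hij : i ≠ j) : ∃ B, M.IsBase B ∧ j ∈ B ∧ i ∉ B ∧ M.IsBase (insert i (B \ {j})) := by
  have hCi : M.Indep (C \ {i}) := circuit_diff_indep hC hi
  obtain ⟨B, hB, hCB⟩ := hCi.exists_isBase_superset
  have hjB : j ∈ B := hCB ⟨hj, hij.symm⟩
  have hiB : i ∉ B := by
    intro hiB
    have : C ⊆ B := by
      intro x hx
      by_cases hxi : x = i
      · subst hxi; exact hiB
      · exact hCB ⟨hx, hxi⟩
    exact circuit_not_indep hC (hB.indep.subset this)
  -- j is in the closure of C \ {j}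
  have hCj : M.Indep (C \ {j}) := circuit_diff_indep hC hj
  have hjcl : j ∈ M.closure (C \ {j}) := by
    have hdep : M.Dep (insert j (C \ {j})) := by
      rw [Set.insert_diff_singleton, Set.insert_eq_of_mem hj]
      exact hC.1
    rw [hCj.insert_dep_iff] at hdep
    exact hdep.1
  -- i is not in the closure of B \ {j}
  have hBj : M.Indep (B \ {j}) := hB.indep.subset diff_subset
  have hicl : i ∉ M.closure (B \ {j}) := by
    intro hicl
    have hsub : C \ {j} ⊆ insert i (B \ {j}) := by
      intro x hx
      by_cases hxi : x = i
      · subst hxi; exact Set.mem_insert _ _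
      · exact Set.mem_insert_of_mem _ ⟨hCB ⟨hx.1, hxi⟩, hx.2⟩
    have h1 : j ∈ M.closure (insert i (B \ {j})) :=
      M.closure_subset_closure hsub hjcl
    rw [Matroid.closure_insert_eq_of_mem_closure hicl] at h1
    exact hB.indep.notMem_closure_diff_of_mem hjB h1
  -- insert i (B \ {j}) is independent
  have hiBj : i ∉ B \ {j} := fun h => hiB h.1
  have hindep : M.Indep (insert i (B \ {j})) := by
    rw [hBj.insert_indep_iff_of_notMem hiBj]
    exact ⟨by rw [hE]; trivial, hicl⟩
  -- it is spanning, hence a base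
  refine ⟨B, hB, hjB, hiB, hindep.isBase_of_ground_subset_closure ?_⟩
  have hjcl' : j ∈ M.closure (insert i (B \ {j})) := by
    refine M.closure_subset_closure ?_ hjcl
    intro x hx
    by_cases hxi : x = i
    · subst hxi; exact Set.mem_insert _ _
    · exact Set.mem_insert_of_mem _ ⟨hCB ⟨hx.1, hxi⟩, hx.2⟩
  have hBsub : B ⊆ M.closure (insert i (B \ {j})) := by
    intro x hx
    by_cases hxj : x = j
    · subst hxj; exact hjcl'
    · exact M.subset_closure _ (by rw [hE]; exact subset_univ _)
        (Set.mem_insert_of_mem _ ⟨hx, hxj⟩)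
  calc M.E = M.closure B := (hB.closure_eq).symm
    _ ⊆ M.closure (M.closure (insert i (B \ {j}))) := M.closure_subset_closure hBsub
    _ = M.closure (insert i (B \ {j})) := M.closure_closure _

/-- After a base exchange there is a circuit containing both exchanged elements. -/
lemma exchange_circuit {M : Matroid (Fin n)} (hE : M.E = Set.univ) {B : Set (Fin n)}
    {e f : Fin n} (hB : M.IsBase B) (he : e ∈ B) (hf : f ∉ B) (hef : e ≠ f)
    (hB'' : M.IsBase (insert f (B \ {e}))) : ∃ C, M.IsCircuit' C ∧ e ∈ C ∧ f ∈ C := by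
  set B'' := insert f (B \ {e}) with hB''def
  have heB'' : e ∉ B'' := by
    intro h
    rcases h with h | h
    · exact hef h
    · exact h.2 rfl
  have hdep : M.Dep (insert e B'') := by
    rw [hB''.indep.insert_dep_iff]
    exact ⟨by rw [hB''.closure_eq, hE]; trivial, heB''⟩
  obtain ⟨C, hCsub, hC⟩ := exists_circuit_subset M hdep
  have heC : e ∈ C := by
    by_contra heC
    have : C ⊆ B'' := fun x hx => (hCsub hx).resolve_left (fun h => heC (h ▸ hx))
    exact circuit_not_indep hC (hB''.indep.subset this)
  have hfC : f ∈ C := by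
    by_contra hfC
    have : C ⊆ B := by
      intro x hx
      rcases hCsub hx with h | h
      · exact h ▸ he
      · rcases h with h | h
        · exact absurd (h ▸ hx) hfC
        · exact h.1
    exact circuit_not_indep hC (hB.indep.subset this)
  exact ⟨C, hC, heC, hfC⟩

lemma indicator_exchange {B : Set (Fin n)} {e f : Fin n} (he : e ∈ B) (hf : f ∉ B)
    (hef : e ≠ f) :
    indicatorVec B - indicatorVec (insert f (B \ {e})) = std e - std f := by
  funext k
  simp only [Pi.sub_apply, indicatorVec, std, Set.mem_insert_iff, Set.mem_diff,
    Set.mem_singleton_iff]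
  by_cases hke : k = e
  · subst hke
    simp [he, hef, hf]
  · by_cases hkf : k = f
    · subst hkf
      simp [hf, Ne.symm hef, hke]
    · by_cases hkB : k ∈ B <;> simp [hke, hkf, hkB]

/-- The span of the difference vectors within components. -/
noncomputable def pairSpan (M : Matroid (Fin n)) : Submodule ℝ (Fin n → ℝ) :=
  Submodule.span ℝ {v | ∃ i j, M.ComponentRel i j ∧ v = std i - std j}

lemma bases_diff_mem {M : Matroid (Fin n)} (hE : M.E = Set.univ) :
    ∀ k (B B' : Set (Fin n)), M.IsBase B → M.IsBase B' → (B \ B').ncard = k →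
      indicatorVec B - indicatorVec B' ∈ pairSpan M := by
  intro k
  induction k using Nat.strong_induction_on with
  | _ k ih =>
    intro B B' hB hB' hcard
    rcases Nat.eq_zero_or_pos k with rfl | hk
    · have hsub : B ⊆ B' := by
        rw [← Set.diff_eq_empty]
        exact Set.ncard_eq_zero (Set.toFinite _) |>.mp hcard
      have : B = B' := hB.eq_of_subset_isBase hB' hsub
      subst this
      simp
    · have hne : (B \ B').Nonempty := by
        rw [Set.nonempty_iff_ne_empty]
        intro h
        rw [h, Set.ncard_empty] at hcard
        omega
      obtain ⟨e, he⟩ := hne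
      obtain ⟨f, hf, hBf⟩ := hB.exchange hB' he
      set B'' := insert f (B \ {e}) with hB''def
      have hef : e ≠ f := fun h => hf.2 (h ▸ he.1)
      have hfB : f ∉ B := hf.2
      -- the difference B'' \ B' is strictly smaller
      have hsub : B'' \ B' ⊆ (B \ B') \ {e} := by
        intro x hx
        rcases hx.1 with h | h
        · exact absurd (h ▸ hf.1) hx.2
        · exact ⟨⟨h.1, hx.2⟩, h.2⟩
      have hlt : (B'' \ B').ncard < k := by
        calc (B'' \ B').ncard ≤ ((B \ B') \ {e}).ncard :=
              Set.ncard_le_ncard hsub (Set.toFinite _)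
          _ < (B \ B').ncard := by
              refine Set.ncard_lt_ncard ?_ (Set.toFinite _)
              exact Set.sdiff_singleton_ssubset.mpr he
          _ = k := hcard
      have hmem2 := ih _ hlt B'' B' hBf hB' rfl
      have hmem1 : indicatorVec B - indicatorVec B'' ∈ pairSpan M := by
        rw [indicator_exchange he.1 hfB hef]
        obtain ⟨C, hC, heC, hfC⟩ := exchange_circuit hE hB he.1 hfB hef hBf
        exact Submodule.subset_span ⟨e, f, Or.inr ⟨C, hC, heC, hfC⟩, rfl⟩
      have : indicatorVec B - indicatorVec B' =
          (indicatorVec B - indicatorVec B'') + (indicatorVec B'' - indicatorVec B') := by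
        abel
      rw [this]
      exact Submodule.add_mem _ hmem1 hmem2

lemma vectorSpan_eq_pairSpan {M : Matroid (Fin n)} (hE : M.E = Set.univ) :
    vectorSpan ℝ (matroidPolytope M) = pairSpan M := by
  have h1 : vectorSpan ℝ (matroidPolytope M) =
      vectorSpan ℝ {x | ∃ B, M.IsBase B ∧ x = indicatorVec B} := by
    rw [← direction_affineSpan, matroidPolytope, affineSpan_convexHull,
      direction_affineSpan]
  rw [h1]
  apply le_antisymm
  · rw [vectorSpan_def]
    rw [Submodule.span_le]
    rintro v ⟨x, ⟨B, hB, rfl⟩, y, ⟨B', hB', rfl⟩, rfl⟩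
    exact bases_diff_mem hE _ B B' hB hB' rfl
  · rw [pairSpan, Submodule.span_le]
    rintro v ⟨i, j, hij, rfl⟩
    rcases hij with rfl | ⟨C, hC, hiC, hjC⟩
    · simp only [sub_self]
      exact Submodule.zero_mem _
    · by_cases hij' : i = j
      · subst hij'
        simp only [sub_self]
        exact Submodule.zero_mem _
      · obtain ⟨B, hB, hjB, hiB, hB'⟩ := circuit_exchange_bases hE hC hiC hjC hij'
        have harith := indicator_exchange hjB hiB (Ne.symm hij')
        have : std i - std j = indicatorVec (insert i (B \ {j})) - indicatorVec B := by
          rw [show indicatorVec (insert i (B \ {j})) - indicatorVec B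
              = -(indicatorVec B - indicatorVec (insert i (B \ {j}))) by abel, harith]
          abel
        rw [this]
        have := vsub_mem_vectorSpan ℝ (p₁ := indicatorVec (insert i (B \ {j})))
          (p₂ := indicatorVec B) (s := {x | ∃ B, M.IsBase B ∧ x = indicatorVec B})
          ⟨_, hB', rfl⟩ ⟨_, hB, rfl⟩
        simpa using this

section LinAlg

variable (r : Fin n → Fin n → Prop)

/-- The class-summing linear map. -/
noncomputable def sumMap : (Fin n → ℝ) →ₗ[ℝ] (Quot r → ℝ) where
  toFun x := fun c => ∑ i : Fin n, if Quot.mk r i = c then x i else 0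
  map_add' x y := by
    funext c
    simp only [Pi.add_apply]
    rw [← Finset.sum_add_distrib]
    congr 1
    funext i
    split <;> simp
  map_smul' a x := by
    funext c
    simp only [Pi.smul_apply, RingHom.id_apply, smul_eq_mul, Finset.mul_sum]
    congr 1
    funext i
    split <;> simp

lemma sumMap_surjective : Function.Surjective (sumMap r) := by
  intro y
  refine ⟨fun i => if i = Quot.out (Quot.mk r i) then y (Quot.mk r i) else 0, ?_⟩
  funext c
  show (∑ i : Fin n, if Quot.mk r i = c then
      (if i = Quot.out (Quot.mk r i) then y (Quot.mk r i) else 0) else 0) = y c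
  have hterm : ∀ i : Fin n, (if Quot.mk r i = c then
      (if i = Quot.out (Quot.mk r i) then y (Quot.mk r i) else 0) else 0)
      = if i = Quot.out c then y c else 0 := by
    intro i
    by_cases hic : i = Quot.out c
    · subst hic
      simp [Quot.out_eq]
    · by_cases hmk : Quot.mk r i = c
      · subst hmk
        simp [hic]
      · simp [hmk, hic]
  rw [Finset.sum_congr rfl (fun i _ => hterm i)]
  simp

lemma sumMap_single (i : Fin n) (c : Quot r) :
    sumMap r (std i) c = if Quot.mk r i = c then 1 else 0 := by
  show (∑ k : Fin n, if Quot.mk r k = c then (if k = i then (1:ℝ) else 0) else 0) = _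
  have hterm : ∀ k : Fin n, (if Quot.mk r k = c then (if k = i then (1:ℝ) else 0) else 0)
      = if k = i then (if Quot.mk r i = c then (1:ℝ) else 0) else 0 := by
    intro k
    by_cases hk : k = i
    · subst hk; simp
    · simp [hk]
  rw [Finset.sum_congr rfl (fun k _ => hterm k)]
  simp

lemma std_sub_mem_of_eqvGen {i j : Fin n}
    (h : Relation.EqvGen r i j) :
    std i - std j ∈ Submodule.span ℝ {v | ∃ i j, r i j ∧ v = std i - std j} := by
  induction h with
  | rel a b hab => exact Submodule.subset_span ⟨a, b, hab, rfl⟩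
  | refl a => simp only [sub_self]; exact Submodule.zero_mem _
  | symm a b _ ih =>
      have : std b - std a = -(std a - std b) := by abel
      rw [this]; exact Submodule.neg_mem _ ih
  | trans a b c _ _ ih1 ih2 =>
      have : std a - std c = (std a - std b) + (std b - std c) := by abel
      rw [this]; exact Submodule.add_mem _ ih1 ih2

lemma ker_sumMap :
    LinearMap.ker (sumMap r) = Submodule.span ℝ {v | ∃ i j, r i j ∧ v = std i - std j} := by
  apply le_antisymm
  · -- ker ≤ span
    intro x hx
    have hx' : ∀ c, (∑ i : Fin n, if Quot.mk r i = c then x i else 0) = 0 := by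
      intro c
      have := LinearMap.mem_ker.mp hx
      exact congrFun this c
    -- x = Σ_i x i • std i ; y = Σ_i x i • (std i - std (out (mk i)))
    have hy : (∑ i : Fin n, x i • (std i - std (Quot.out (Quot.mk r i)))) ∈
        Submodule.span ℝ {v | ∃ i j, r i j ∧ v = std i - std j} := by
      refine Submodule.sum_mem _ (fun i _ => Submodule.smul_mem _ _ ?_)
      apply std_sub_mem_of_eqvGen
      rw [← Quot.eq]
      exact (Quot.out_eq (Quot.mk r i)).symm
    have hxy : x = ∑ i : Fin n, x i • (std i - std (Quot.out (Quot.mk r i))) := by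
      have hw : (∑ i : Fin n, x i • std (Quot.out (Quot.mk r i))) = 0 := by
        funext k
        rw [Finset.sum_apply]
        simp only [Pi.smul_apply, std, smul_eq_mul, mul_ite, mul_one, mul_zero]
        by_cases hk : k = Quot.out (Quot.mk r k)
        · have hterm : ∀ i : Fin n,
              (if k = Quot.out (Quot.mk r i) then x i else 0)
              = if Quot.mk r i = Quot.mk r k then x i else 0 := by
            intro i
            by_cases h1 : Quot.mk r i = Quot.mk r k
            · rw [if_pos h1, if_pos]
              rw [h1, ← hk]
            · rw [if_neg h1, if_neg]
              intro h2
              apply h1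
              have : Quot.mk r k = Quot.mk r (Quot.out (Quot.mk r i)) := by rw [← h2]
              rw [Quot.out_eq] at this
              exact this.symm
          rw [Finset.sum_congr rfl (fun i _ => hterm i)]
          have := hx' (Quot.mk r k)
          simpa using this
        · have hterm : ∀ i : Fin n,
              (if k = Quot.out (Quot.mk r i) then x i else 0) = 0 := by
            intro i
            rw [if_neg]
            intro h2
            apply hk
            have : Quot.mk r k = Quot.mk r (Quot.out (Quot.mk r i)) := by rw [← h2]
            rw [Quot.out_eq] at this
            rw [this]
            exact h2
          rw [Finset.sum_congr rfl (fun i _ => hterm i)]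
          simp
      have hx2 : x = ∑ i : Fin n, x i • std i := by
        funext k
        rw [Finset.sum_apply]
        simp only [Pi.smul_apply, std, smul_eq_mul, mul_ite, mul_one, mul_zero]
        rw [Finset.sum_ite_eq Finset.univ k x]
        simp
      calc x = ∑ i : Fin n, x i • std i := hx2
        _ = (∑ i : Fin n, x i • (std i - std (Quot.out (Quot.mk r i))))
            + ∑ i : Fin n, x i • std (Quot.out (Quot.mk r i)) := by
              rw [← Finset.sum_add_distrib]
              congr 1
              funext i
              rw [smul_sub]
              abel
        _ = ∑ i : Fin n, x i • (std i - std (Quot.out (Quot.mk r i))) := by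
              rw [hw, add_zero]
    rw [hxy]
    exact hy
  · rw [Submodule.span_le]
    rintro v ⟨i, j, hij, rfl⟩
    rw [SetLike.mem_coe, LinearMap.mem_ker, map_sub]
    funext c
    simp only [Pi.sub_apply, Pi.zero_apply, sumMap_single]
    have : Quot.mk r i = Quot.mk r j := Quot.sound hij
    rw [this]
    ring

lemma finrank_pairSpan_lin :
    Module.finrank ℝ (Submodule.span ℝ {v | ∃ i j, r i j ∧ v = std i - std j})
      = n - Nat.card (Quot r) := by
  haveI : Finite (Quot r) := Finite.of_surjective (Quot.mk r) (Quot.mk_surjective (r := r))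
  haveI : Fintype (Quot r) := Fintype.ofFinite _
  have hsurj : LinearMap.range (sumMap r) = ⊤ :=
    LinearMap.range_eq_top.mpr (sumMap_surjective r)
  have hrn := LinearMap.finrank_range_add_finrank_ker (sumMap r)
  rw [hsurj] at hrn
  have h1 : Module.finrank ℝ (⊤ : Submodule ℝ (Quot r → ℝ)) = Nat.card (Quot r) := by
    rw [finrank_top, Module.finrank_pi, Nat.card_eq_fintype_card]
  have h2 : Module.finrank ℝ (Fin n → ℝ) = n := Module.finrank_fin_fun ℝ
  rw [h1, h2] at hrn
  rw [← ker_sumMap]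
  omega

end LinAlg

end MatroidPolytopeAux

/-- The dimension of the matroid polytope of a matroid `M` on `n` elements equals
`n − c(M)`, where `c(M)` is the number of connected components of `M`. -/
theorem matroidPolytope_dim {n : ℕ} (M : Matroid (Fin n)) (hE : M.E = Set.univ) :
    Module.finrank ℝ (vectorSpan ℝ (matroidPolytope M)) = n - M.numComponents := by
  rw [MatroidPolytopeAux.vectorSpan_eq_pairSpan hE, Matroid.numComponents,
    MatroidPolytopeAux.pairSpan, MatroidPolytopeAux.finrank_pairSpan_lin]
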